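/- For any gossip protocol on any undirected connected graph of size n with f > 1 curious nodes: if the protocol satisfies ε-differential privacy against the average-case (or worst-case) adversary, then ε ≥ ln(f − 1). -/

import Mathlib

open MeasureTheory Finset

namespace GossipDP

/-- Round-by-round record of communications: `e t` is the set of communications
`(sender, receiver)` taking place in round `t`. -/
abbrev Exec (n : ℕ) := ℕ → Finset (Fin n × Fin n)

instance (n : ℕ) : MeasurableSpace (Finset (Fin n × Fin n)) := ⊤

/-- Active sets of an execution `e` started at the source `s`: initially only the
source is active, and the nodes active in round `t+1` are exactly those that
received a message in round `t`. -/
def active {n : ℕ} (s : Fin n) (e : Exec n) : ℕ → Finset (Fin n)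
  | 0 => {s}
  | t + 1 => (e t).image Prod.snd

/-- A valid execution of a gossip protocol on `G` from source `s`: in every round
all communications are sent by active nodes, along edges of `G` (or fictitious
self-messages allowing a node to stay active). -/
def IsValidExec {n : ℕ} (G : SimpleGraph (Fin n)) (s : Fin n) (e : Exec n) : Prop :=
  ∀ t, ∀ c ∈ e t, c.1 ∈ active s e t ∧ (c.1 = c.2 ∨ G.Adj c.1 c.2)

/-- The adversary's observation for the curious set `F`: the subsequence of
communications visible to `F` (those with an endpoint in `F`), shifted so that it
starts at the first round `t_adv` in which a curious node takes part in a
communication (the adversary does not know the global starting time). -/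
noncomputable def obs {n : ℕ} (F : Finset (Fin n)) (e : Exec n) : Exec n := by
  classical
  exact fun t =>
    if h : ∃ k, ((e k).filter fun c => c.1 ∈ F ∨ c.2 ∈ F) ≠ ∅ then
      (e (Nat.find h + t)).filter fun c => c.1 ∈ F ∨ c.2 ∈ F
    else ∅

/-- `ε`-differential privacy of the protocol `P` (a family of execution
distributions, one for each source) for the curious set `F`: for any two
non-curious sources `u, v` and any measurable event `A` of adversarial
observations, `Pr[obs^(v) ∈ A] ≤ e^ε · Pr[obs^(u) ∈ A]`.  This says exactly
`D_∞(S_adv^(v) ‖ S_adv^(u)) ≤ ε` for all `u, v ∉ F`. -/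
def DPFor {n : ℕ} (P : Fin n → Measure (Exec n)) (F : Finset (Fin n)) (ε : ℝ) : Prop :=
  ∀ u v : Fin n, u ∉ F → v ∉ F →
    ∀ A : Set (Exec n), MeasurableSet A →
      P v (obs F ⁻¹' A) ≤ ENNReal.ofReal (Real.exp ε) * P u (obs F ⁻¹' A)

-- auxiliary definitions

open Classical in
noncomputable def filtF {n : ℕ} (F : Finset (Fin n)) (S : Finset (Fin n × Fin n)) :
    Finset (Fin n × Fin n) :=
  S.filter fun c => c.1 ∈ F ∨ c.2 ∈ F

def Zset {n : ℕ} (v : Fin n) : Set (Finset (Fin n × Fin n)) :=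
  {S | S.Nonempty ∧ ∀ c ∈ S, c.1 = v}

/-- Executions whose first `F`-visible round exists and has all senders equal to `v`. -/
def Ev {n : ℕ} (F : Finset (Fin n)) (v : Fin n) : Set (Exec n) :=
  ⋃ T : ℕ, ({e : Exec n | ∀ k < T, filtF F (e k) = ∅} ∩ {e : Exec n | filtF F (e T) ∈ Zset v})

noncomputable def minOut {n : ℕ} (v : Fin n) (S : Finset (Fin n × Fin n)) : Fin n :=
  if h : ((S.image Prod.snd).erase v).Nonempty then ((S.image Prod.snd).erase v).min' h else v

def VD {n : ℕ} (G : SimpleGraph (Fin n)) (v : Fin n) : Set (Exec n) :=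
  {e | IsValidExec G v e} ∩ {e | ∀ w : Fin n, ∃ t, w ∈ active v e t}

/-- Valid disseminating executions from `v` whose first nontrivial round has minimal
fresh receiver `x`. -/
def Wv {n : ℕ} (G : SimpleGraph (Fin n)) (v x : Fin n) : Set (Exec n) :=
  VD G v ∩
  ⋃ T : ℕ, ({e : Exec n | ∀ k < T, e k ⊆ {(v,v)}} ∩ {e : Exec n | ¬ e T ⊆ {(v,v)}} ∩
    {e : Exec n | minOut v (e T) = x})

-- deterministic lemmas

lemma active_sub {n : ℕ} (v : Fin n) (e : Exec n) (T : ℕ)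
    (hsolo : ∀ k < T, e k ⊆ {(v,v)}) : ∀ t ≤ T, active v e t ⊆ {v} := by
  intro t ht
  cases t with
  | zero => simp [active]
  | succ s =>
      intro y hy
      simp only [active, Finset.mem_image] at hy
      obtain ⟨c, hc, rfl⟩ := hy
      have := hsolo s (by omega) hc
      simp only [Finset.mem_singleton] at this
      simp [this]

lemma Wv_subset_Ev {n : ℕ} (G : SimpleGraph (Fin n)) (F : Finset (Fin n)) (v x : Fin n)
    (hv : v ∉ F) (hx : x ∈ F) : Wv G v x ⊆ Ev F v := by
  rintro e ⟨⟨hval, _⟩, hU⟩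
  simp only [Set.mem_iUnion, Set.mem_inter_iff, Set.mem_setOf_eq] at hU
  obtain ⟨T, ⟨hsolo, hT⟩, hmin⟩ := hU
  have hxv : x ≠ v := fun h => hv (h ▸ hx)
  have hne : (((e T).image Prod.snd).erase v).Nonempty := by
    by_contra hne
    rw [minOut, dif_neg hne] at hmin
    exact hxv hmin.symm
  have hxmem : x ∈ ((e T).image Prod.snd).erase v := by
    rw [minOut, dif_pos hne] at hmin
    exact hmin ▸ Finset.min'_mem _ hne
  obtain ⟨c, hc, hc2⟩ := Finset.mem_image.mp (Finset.mem_of_mem_erase hxmem)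
  refine Set.mem_iUnion.mpr ⟨T, ⟨?_, ?_, ?_⟩⟩
  · intro k hk
    rw [filtF, Finset.filter_eq_empty_iff]
    intro d hd hor
    have := hsolo k hk hd
    simp only [Finset.mem_singleton] at this
    subst this
    rcases hor with h | h <;> exact hv h
  · exact ⟨c, Finset.mem_filter.mpr ⟨hc, Or.inr (hc2 ▸ hx)⟩⟩
  · intro d hd
    have hd' := Finset.mem_filter.mp hd
    have := (hval T d hd'.1).1
    have hsub := active_sub v e T hsolo T le_rfl
    simpa using hsub this

lemma VD_subset_union {n : ℕ} (G : SimpleGraph (Fin n)) (v : Fin n) (hn : 1 < n) :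
    VD G v ⊆ ⋃ x ∈ Finset.univ.erase v, Wv G v x := by
  intro e he
  obtain ⟨hval, hdis⟩ := he
  have hex : ∃ t, ¬ e t ⊆ {(v,v)} := by
    by_contra hall
    push_neg at hall
    obtain ⟨w, hw⟩ := Fintype.exists_ne_of_one_lt_card (by simpa using hn) v
    obtain ⟨t, ht⟩ := hdis w
    have : active v e t ⊆ {v} := by
      cases t with
      | zero => simp [active]
      | succ s =>
          intro y hy
          simp only [active, Finset.mem_image] at hy
          obtain ⟨c, hc, rfl⟩ := hy
          have := hall s hc
          simp only [Finset.mem_singleton] at this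
          simp [this]
    have := this ht
    simp only [Finset.mem_singleton] at this
    exact hw this
  set T := Nat.find hex with hTdef
  have hT : ¬ e T ⊆ {(v,v)} := Nat.find_spec hex
  have hsolo : ∀ k < T, e k ⊆ {(v,v)} := by
    intro k hk
    exact not_not.mp (Nat.find_min hex hk)
  obtain ⟨c, hc, hcne⟩ := Finset.not_subset.mp hT
  have hc1 : c.1 = v := by
    have := (hval T c hc).1
    have hsub := active_sub v e T hsolo T le_rfl
    simpa using hsub this
  have hc2 : c.2 ≠ v := by
    intro h
    apply hcne
    simp only [Finset.mem_singleton]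
    exact Prod.ext hc1 h
  have hne : (((e T).image Prod.snd).erase v).Nonempty :=
    ⟨c.2, Finset.mem_erase.mpr ⟨hc2, Finset.mem_image_of_mem _ hc⟩⟩
  set x := minOut v (e T) with hxdef
  have hxmem : x ∈ ((e T).image Prod.snd).erase v := by
    rw [hxdef, minOut, dif_pos hne]
    exact Finset.min'_mem _ hne
  have hxv : x ≠ v := (Finset.mem_erase.mp hxmem).1
  refine Set.mem_iUnion.mpr ⟨x, Set.mem_iUnion.mpr ⟨Finset.mem_erase.mpr ⟨hxv, Finset.mem_univ x⟩, ⟨⟨hval, hdis⟩, ?_⟩⟩⟩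
  exact Set.mem_iUnion.mpr ⟨T, ⟨hsolo, hT⟩, rfl⟩

-- disjointness

lemma Wv_disjoint {n : ℕ} (G : SimpleGraph (Fin n)) (v : Fin n) {x y : Fin n} (hxy : x ≠ y) :
    Disjoint (Wv G v x) (Wv G v y) := by
  rw [Set.disjoint_left]
  rintro e ⟨_, hU⟩ ⟨_, hU'⟩
  simp only [Set.mem_iUnion, Set.mem_inter_iff, Set.mem_setOf_eq] at hU hU'
  obtain ⟨T, ⟨hsolo, hT⟩, hmin⟩ := hU
  obtain ⟨T', ⟨hsolo', hT'⟩, hmin'⟩ := hU'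
  have hTT : T = T' := by
    by_contra h
    rcases Nat.lt_or_ge T T' with h' | h'
    · exact hT (hsolo' T h')
    · exact hT' (hsolo T' (by omega))
  subst hTT
  exact hxy (hmin ▸ hmin' ▸ rfl)

lemma Ev_disjoint {n : ℕ} (F : Finset (Fin n)) {v v' : Fin n} (hvv : v ≠ v') :
    Disjoint (Ev F v) (Ev F v') := by
  rw [Set.disjoint_left]
  intro e he he'
  simp only [Ev, Set.mem_iUnion, Set.mem_inter_iff, Set.mem_setOf_eq] at he he'
  obtain ⟨T, hpre, hZ⟩ := he
  obtain ⟨T', hpre', hZ'⟩ := he'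
  have hTT : T = T' := by
    by_contra h
    rcases Nat.lt_or_ge T T' with h' | h'
    · exact hZ.1.ne_empty (hpre' T h')
    · rcases Nat.lt_or_ge T' T with h'' | h''
      · exact hZ'.1.ne_empty (hpre T' h'')
      · omega
  subst hTT
  obtain ⟨c, hc⟩ := hZ.1
  exact hvv ((hZ.2 c hc) ▸ (hZ'.2 c hc) ▸ rfl)

-- obs characterization

lemma obs_mem_iff {n : ℕ} (F : Finset (Fin n)) (v : Fin n) (e : Exec n) :
    obs F e 0 ∈ Zset v ↔ e ∈ Ev F v := by
  constructor
  · intro h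
    by_cases hex : ∃ k, ((e k).filter fun c => c.1 ∈ F ∨ c.2 ∈ F) ≠ ∅
    · have hobs : obs F e 0 = (e (Nat.find hex + 0)).filter fun c => c.1 ∈ F ∨ c.2 ∈ F := by
        simp only [obs]
        rw [dif_pos hex]
      rw [hobs] at h
      refine Set.mem_iUnion.mpr ⟨Nat.find hex, ?_, ?_⟩
      · intro k hk
        have := Nat.find_min hex hk
        simpa [filtF] using this
      · simpa [filtF] using h
    · have hobs : obs F e 0 = ∅ := by
        simp only [obs]
        rw [dif_neg hex]
      rw [hobs] at h
      exact absurd rfl h.1.ne_empty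
  · intro h
    simp only [Ev, Set.mem_iUnion, Set.mem_inter_iff, Set.mem_setOf_eq] at h
    obtain ⟨T, hpre, hZ⟩ := h
    have hTne : ((e T).filter fun c => c.1 ∈ F ∨ c.2 ∈ F) ≠ ∅ := by
      have := hZ.1.ne_empty
      simpa [filtF] using this
    have hex : ∃ k, ((e k).filter fun c => c.1 ∈ F ∨ c.2 ∈ F) ≠ ∅ := ⟨T, hTne⟩
    have hfind : Nat.find hex = T := by
      rw [Nat.find_eq_iff]
      refine ⟨hTne, fun k hk => ?_⟩
      have := hpre k hk
      simpa [filtF] using this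
    have hobs : obs F e 0 = (e (Nat.find hex + 0)).filter fun c => c.1 ∈ F ∨ c.2 ∈ F := by
      simp only [obs]
      rw [dif_pos hex]
    rw [hobs, hfind]
    simpa [filtF] using hZ

-- measurability

lemma measSet_coord {n : ℕ} (t : ℕ) (B : Set (Finset (Fin n × Fin n))) :
    MeasurableSet {e : Exec n | e t ∈ B} := by
  have h : Measurable (fun e : Exec n => e t) := measurable_pi_apply t
  exact h (by exact MeasurableSpace.measurableSet_top)

lemma measSet_pair {n : ℕ} (t s : ℕ)
    (B : Set (Finset (Fin n × Fin n) × Finset (Fin n × Fin n))) :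
    MeasurableSet {e : Exec n | (e t, e s) ∈ B} := by
  have : {e : Exec n | (e t, e s) ∈ B} =
      ⋃ p ∈ B, ({e : Exec n | e t ∈ ({p.1} : Set _)} ∩ {e : Exec n | e s ∈ ({p.2} : Set _)}) := by
    ext e
    simp only [Set.mem_iUnion, Set.mem_inter_iff, Set.mem_setOf_eq, Set.mem_singleton_iff]
    constructor
    · intro h; exact ⟨(e t, e s), h, rfl, rfl⟩
    · rintro ⟨p, hp, h1, h2⟩
      rw [h1, h2]
      exact hp
  rw [this]
  exact MeasurableSet.biUnion (Set.to_countable _)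
    (fun p _ => (measSet_coord t _).inter (measSet_coord s _))

lemma meas_Ev {n : ℕ} (F : Finset (Fin n)) (v : Fin n) : MeasurableSet (Ev F v) := by
  refine MeasurableSet.iUnion fun T => MeasurableSet.inter ?_ ?_
  · have : {e : Exec n | ∀ k < T, filtF F (e k) = ∅} =
        ⋂ k, ⋂ (_ : k < T), {e : Exec n | e k ∈ {S | filtF F S = ∅}} := by
      ext e; simp
    rw [this]
    exact MeasurableSet.iInter fun k => MeasurableSet.iInter fun _ => measSet_coord k _
  · exact measSet_coord T {S | filtF F S ∈ Zset v}

lemma meas_VD {n : ℕ} (G : SimpleGraph (Fin n)) (v : Fin n) : MeasurableSet (VD G v) := by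
  refine MeasurableSet.inter ?_ ?_
  · have : {e : Exec n | IsValidExec G v e} =
        ⋂ t, {e : Exec n | ∀ c ∈ e t, c.1 ∈ active v e t ∧ (c.1 = c.2 ∨ G.Adj c.1 c.2)} := by
      ext e; simp [IsValidExec]
    rw [this]
    refine MeasurableSet.iInter fun t => ?_
    cases t with
    | zero =>
        exact measSet_coord 0 {S | ∀ c ∈ S, c.1 ∈ ({v} : Finset (Fin n)) ∧ (c.1 = c.2 ∨ G.Adj c.1 c.2)}
    | succ s =>
        have : {e : Exec n | ∀ c ∈ e (s+1), c.1 ∈ active v e (s+1) ∧ (c.1 = c.2 ∨ G.Adj c.1 c.2)} =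
            {e : Exec n | (e s, e (s+1)) ∈
              {p : Finset (Fin n × Fin n) × Finset (Fin n × Fin n) |
                ∀ c ∈ p.2, c.1 ∈ p.1.image Prod.snd ∧ (c.1 = c.2 ∨ G.Adj c.1 c.2)}} := by
          ext e; simp [active]
        rw [this]
        exact measSet_pair s (s+1) _
  · have hrw : {e : Exec n | ∀ w : Fin n, ∃ t, w ∈ active v e t} =
        ⋂ w : Fin n, ⋃ t : ℕ, {e : Exec n | w ∈ active v e t} := by
      ext e; simp
    rw [hrw]
    refine MeasurableSet.iInter fun w => MeasurableSet.iUnion fun t => ?_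
    cases t with
    | zero =>
        by_cases h : w ∈ active v (fun _ => ∅) 0
        · have : {e : Exec n | w ∈ active v e 0} = Set.univ := by
            ext e; simpa [active] using (by simpa [active] using h : w ∈ ({v} : Finset (Fin n)))
          rw [this]; exact MeasurableSet.univ
        · have : {e : Exec n | w ∈ active v e 0} = ∅ := by
            ext e; simpa [active] using (by simpa [active] using h : w ∉ ({v} : Finset (Fin n)))
          rw [this]; exact MeasurableSet.empty
    | succ s =>
        have : {e : Exec n | w ∈ active v e (s+1)} = {e : Exec n | e s ∈ {S | w ∈ S.image Prod.snd}} := by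
          ext e; simp [active]
        rw [this]
        exact measSet_coord s _

lemma meas_Wv {n : ℕ} (G : SimpleGraph (Fin n)) (v x : Fin n) : MeasurableSet (Wv G v x) := by
  refine (meas_VD G v).inter (MeasurableSet.iUnion fun T => ?_)
  refine MeasurableSet.inter (MeasurableSet.inter ?_ ?_) ?_
  · have : {e : Exec n | ∀ k < T, e k ⊆ {(v,v)}} =
        ⋂ k, ⋂ (_ : k < T), {e : Exec n | e k ∈ {S | S ⊆ {(v,v)}}} := by
      ext e; simp
    rw [this]
    exact MeasurableSet.iInter fun k => MeasurableSet.iInter fun _ => measSet_coord k _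
  · exact measSet_coord T {S | ¬ S ⊆ {(v,v)}}
  · exact measSet_coord T {S | minOut v S = x}

-- counting

lemma count_FxV {n f : ℕ} (v x : Fin n) (hvx : x ≠ v) (hf : 1 ≤ f) :
    (((Finset.univ : Finset (Fin n)).powersetCard f).filter
      (fun F => v ∉ F ∧ x ∈ F)).card = (n-2).choose (f-1) := by
  classical
  have hbase : (((Finset.univ : Finset (Fin n)).erase v).erase x).card = n - 2 := by
    rw [Finset.card_erase_of_mem (Finset.mem_erase.mpr ⟨hvx, Finset.mem_univ x⟩),
      Finset.card_erase_of_mem (Finset.mem_univ v)]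
    simp only [Finset.card_univ, Fintype.card_fin]
    omega
  rw [← hbase, ← Finset.card_powersetCard]
  refine Finset.card_bij' (fun F _ => F.erase x) (fun S _ => insert x S) ?_ ?_ ?_ ?_
  · intro F hF
    simp only [Finset.mem_filter, Finset.mem_powersetCard] at hF
    obtain ⟨⟨hsub, hcard⟩, hv, hx⟩ := hF
    rw [Finset.mem_powersetCard]
    constructor
    · intro y hy
      rw [Finset.mem_erase] at hy
      exact Finset.mem_erase.mpr ⟨hy.1, Finset.mem_erase.mpr ⟨fun h => hv (h ▸ hy.2), Finset.mem_univ y⟩⟩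
    · rw [Finset.card_erase_of_mem hx, hcard]
  · intro S hS
    rw [Finset.mem_powersetCard] at hS
    obtain ⟨hsub, hcard⟩ := hS
    have hxS : x ∉ S := fun h => (Finset.mem_erase.mp (hsub h)).1 rfl
    simp only [Finset.mem_filter, Finset.mem_powersetCard]
    refine ⟨⟨Finset.subset_univ _, ?_⟩, ?_, Finset.mem_insert_self x S⟩
    · rw [Finset.card_insert_of_notMem hxS, hcard]
      omega
    · intro h
      rcases Finset.mem_insert.mp h with h | h
      · exact hvx h.symm
      · exact (Finset.mem_erase.mp (Finset.mem_erase.mp (hsub h)).2).1 rfl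
  · intro F hF
    simp only [Finset.mem_filter] at hF
    exact Finset.insert_erase hF.2.2
  · intro S hS
    rw [Finset.mem_powersetCard] at hS
    have hxS : x ∉ S := fun h => (Finset.mem_erase.mp (hS.1 h)).1 rfl
    exact Finset.erase_insert hxS

-- probability lemmas

lemma P_VD_eq_one {n : ℕ} (G : SimpleGraph (Fin n)) (v : Fin n)
    (P : Fin n → Measure (Exec n)) (hprob : ∀ s, IsProbabilityMeasure (P s))
    (hvalid : ∀ s, P s {e | ¬ IsValidExec G s e} = 0)
    (hdiss : ∀ s, P s {e | ∀ w : Fin n, ∃ t, w ∈ active s e t} = 1) :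
    P v (VD G v) = 1 := by
  haveI := hprob v
  refine le_antisymm prob_le_one ?_
  have hsub : {e : Exec n | ∀ w : Fin n, ∃ t, w ∈ active v e t} ⊆
      VD G v ∪ {e | ¬ IsValidExec G v e} := by
    intro e he
    by_cases h : IsValidExec G v e
    · exact Or.inl ⟨h, he⟩
    · exact Or.inr h
  calc (1 : ENNReal) = P v {e | ∀ w : Fin n, ∃ t, w ∈ active v e t} := (hdiss v).symm
    _ ≤ P v (VD G v ∪ {e | ¬ IsValidExec G v e}) := measure_mono hsub
    _ ≤ P v (VD G v) + P v {e | ¬ IsValidExec G v e} := measure_union_le _ _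
    _ = P v (VD G v) := by rw [hvalid v, add_zero]

lemma sum_W_eq_one {n : ℕ} (G : SimpleGraph (Fin n)) (v : Fin n) (hn : 1 < n)
    (P : Fin n → Measure (Exec n)) (hprob : ∀ s, IsProbabilityMeasure (P s))
    (hvalid : ∀ s, P s {e | ¬ IsValidExec G s e} = 0)
    (hdiss : ∀ s, P s {e | ∀ w : Fin n, ∃ t, w ∈ active s e t} = 1) :
    ∑ x ∈ Finset.univ.erase v, P v (Wv G v x) = 1 := by
  have hdisj : Set.PairwiseDisjoint ↑(Finset.univ.erase v) (Wv G v) := by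
    intro x _ y _ hxy
    exact Wv_disjoint G v hxy
  rw [← measure_biUnion_finset hdisj (fun x _ => meas_Wv G v x)]
  have hcover : (⋃ x ∈ Finset.univ.erase v, Wv G v x) = VD G v := by
    apply le_antisymm
    · exact Set.iUnion₂_subset fun x _ => Set.inter_subset_left
    · exact VD_subset_union G v hn
  rw [hcover]
  exact P_VD_eq_one G v P hprob hvalid hdiss

lemma sum_WF_le_Ev {n : ℕ} (G : SimpleGraph (Fin n)) (F : Finset (Fin n)) (v : Fin n)
    (hv : v ∉ F) (P : Fin n → Measure (Exec n)) :
    ∑ x ∈ F, P v (Wv G v x) ≤ P v (Ev F v) := by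
  have hdisj : Set.PairwiseDisjoint ↑F (Wv G v) := by
    intro x _ y _ hxy
    exact Wv_disjoint G v hxy
  rw [← measure_biUnion_finset hdisj (fun x _ => meas_Wv G v x)]
  exact measure_mono (Set.iUnion₂_subset fun x hx => Wv_subset_Ev G F v x hv hx)

lemma sum_Ev_le_one {n : ℕ} (F : Finset (Fin n)) (u : Fin n)
    (P : Fin n → Measure (Exec n)) (hprob : ∀ s, IsProbabilityMeasure (P s)) :
    ∑ v ∈ Finset.univ \ F, P u (Ev F v) ≤ 1 := by
  haveI := hprob u
  have hdisj : Set.PairwiseDisjoint ↑(Finset.univ \ F) (Ev F) := by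
    intro x _ y _ hxy
    exact Ev_disjoint F hxy
  rw [← measure_biUnion_finset hdisj (fun v _ => meas_Ev F v)]
  exact prob_le_one

lemma dp_Ev {n : ℕ} (F : Finset (Fin n)) (u v : Fin n) (hu : u ∉ F) (hv : v ∉ F)
    (P : Fin n → Measure (Exec n)) (ε : ℝ) (hdp : DPFor P F ε) :
    P v (Ev F v) ≤ ENNReal.ofReal (Real.exp ε) * P u (Ev F v) := by
  have hA : MeasurableSet ((fun o : Exec n => o 0) ⁻¹' Zset v) :=
    (measurable_pi_apply 0) MeasurableSpace.measurableSet_top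
  have hpre : obs F ⁻¹' ((fun o : Exec n => o 0) ⁻¹' Zset v) = Ev F v := by
    ext e
    exact obs_mem_iff F v e
  have := hdp u v hu hv _ hA
  rwa [hpre] at this

-- binomial identity

lemma master_id {n f : ℕ} (hf : 1 ≤ f) (hn : f + 1 ≤ n) :
    n * ((n-1) * ((n-2).choose (f-1))) = (n.choose f) * f * (n - f) := by
  obtain ⟨g, rfl⟩ : ∃ g, f = g + 1 := ⟨f-1, by omega⟩
  obtain ⟨m, rfl⟩ : ∃ m, n = m + 2 := ⟨n-2, by omega⟩
  have e1 : m + 2 - 1 = m + 1 := by omega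
  have e2 : m + 2 - 2 = m := by omega
  have e3 : g + 1 - 1 = g := by omega
  have e4 : m + 2 - (g + 1) = m + 1 - g := by omega
  rw [e1, e2, e3, e4]
  have h1 := Nat.add_one_mul_choose_eq m g
  have h2 := Nat.add_one_mul_choose_eq (m+1) (g+1)
  have h3 := Nat.choose_succ_right_eq (m+2) (g+1)
  rw [e4] at h3
  calc (m+2) * ((m+1) * (Nat.choose m g))
      = (m+2) * ((Nat.choose (m+1) (g+1)) * (g+1)) := by rw [h1]
    _ = ((m+2) * (Nat.choose (m+1) (g+1))) * (g+1) := by ring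
    _ = ((Nat.choose (m+2) (g+2)) * (g+2)) * (g+1) := by rw [h2]
    _ = ((Nat.choose (m+2) (g+1)) * (m+1-g)) * (g+1) := by rw [h3]
    _ = (Nat.choose (m+2) (g+1)) * (g+1) * (m+1-g) := by ring

-- the averaging / existence lemma

set_option maxHeartbeats 1000000 in
open Classical in
lemma exists_good {n f : ℕ} (hf : 2 ≤ f) (hn : f + 2 ≤ n)
    (w : Fin n → Fin n → ℝ) (hw0 : ∀ v x, 0 ≤ w v x)
    (hwsum : ∀ v, ∑ x ∈ Finset.univ.erase v, w v x = 1)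
    (Dpred : Finset (Fin n) → Prop)
    (hDcard : (1 - 1/(n:ℝ)) * (((Finset.univ : Finset (Fin n)).powersetCard f).card : ℝ)
      ≤ ((((Finset.univ : Finset (Fin n)).powersetCard f).filter Dpred).card : ℝ)) :
    ∃ F ∈ ((Finset.univ : Finset (Fin n)).powersetCard f).filter Dpred,
      ∃ u ∈ Finset.univ \ F,
      ((f:ℝ)-1) * (1 - ∑ x ∈ F, w u x) < ∑ v ∈ (Finset.univ \ F).erase u, ∑ x ∈ F, w v x := by
  classical
  by_contra hcon
  push_neg at hcon
  set A : Finset (Finset (Fin n)) := (Finset.univ : Finset (Fin n)).powersetCard f with hA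
  have hfn : f ≤ n := by omega
  have hcard : ∀ F ∈ A, F.card = f := fun F hF => (Finset.mem_powersetCard.mp hF).2
  have hsubsets : ∀ (F : Finset (Fin n)) (v : Fin n), v ∉ F → F ⊆ Finset.univ.erase v := by
    intro F v hv y hy
    exact Finset.mem_erase.mpr ⟨fun h => hv (h ▸ hy), Finset.mem_univ y⟩
  have hSle1 : ∀ (F : Finset (Fin n)) (v : Fin n), v ∉ F → ∑ x ∈ F, w v x ≤ 1 := by
    intro F v hv
    rw [← hwsum v]
    exact Finset.sum_le_sum_of_subset_of_nonneg (hsubsets F v hv) (fun x _ _ => hw0 v x)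
  have hSnn : ∀ (v : Fin n) (F : Finset (Fin n)), 0 ≤ ∑ x ∈ F, w v x :=
    fun v F => Finset.sum_nonneg (fun x _ => hw0 v x)
  have hcard_sd : ∀ F ∈ A, ((Finset.univ \ F).card : ℝ) = (n:ℝ) - f := by
    intro F hF
    rw [Finset.card_sdiff_of_subset (Finset.subset_univ F), Finset.card_univ, Fintype.card_fin, hcard F hF,
      Nat.cast_sub hfn]
  have hcard_sde : ∀ F ∈ A, ∀ u ∈ Finset.univ \ F,
      (((Finset.univ \ F).erase u).card : ℝ) = (n:ℝ) - f - 1 := by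
    intro F hF u hu
    rw [Finset.card_erase_of_mem hu, Finset.card_sdiff_of_subset (Finset.subset_univ F), Finset.card_univ,
      Fintype.card_fin, hcard F hF, Nat.cast_sub (by omega : 1 ≤ n - f), Nat.cast_sub hfn,
      Nat.cast_one]
  -- abbreviation for per-(F,u) quantity
  set qq : Finset (Fin n) → Fin n → ℝ := fun F u =>
    (∑ v ∈ (Finset.univ \ F).erase u, ∑ x ∈ F, w v x) - ((f:ℝ)-1) * (1 - ∑ x ∈ F, w u x)
    with hqq
  -- per-F sum of qq
  have hQsum : ∀ F ∈ A, ∑ u ∈ Finset.univ \ F, qq F u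
      = ((n:ℝ) - 2) * (∑ v ∈ Finset.univ \ F, ∑ x ∈ F, w v x) - ((f:ℝ)-1)*((n:ℝ)-f) := by
    intro F hF
    have h1 : ∀ u ∈ Finset.univ \ F, ∑ v ∈ (Finset.univ \ F).erase u, ∑ x ∈ F, w v x
        = (∑ v ∈ Finset.univ \ F, ∑ x ∈ F, w v x) - ∑ x ∈ F, w u x := by
      intro u hu
      have := Finset.add_sum_erase (Finset.univ \ F) (fun v => ∑ x ∈ F, w v x) hu
      linarith
    have h2 : ∑ u ∈ Finset.univ \ F, qq F u
        = ∑ u ∈ Finset.univ \ F, (((∑ v ∈ Finset.univ \ F, ∑ x ∈ F, w v x) - ∑ x ∈ F, w u x)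
            - ((f:ℝ)-1) * (1 - ∑ x ∈ F, w u x)) := by
      refine Finset.sum_congr rfl (fun u hu => ?_)
      rw [hqq]
      simp only
      rw [h1 u hu]
    rw [h2]
    rw [Finset.sum_sub_distrib, Finset.sum_sub_distrib, ← Finset.mul_sum, Finset.sum_sub_distrib,
      Finset.sum_const, Finset.sum_const, nsmul_eq_mul, nsmul_eq_mul, mul_one, hcard_sd F hF]
    ring
  -- the triple-sum computation
  have hsum_T : ∑ F ∈ A, ∑ v ∈ Finset.univ \ F, ∑ x ∈ F, w v x
      = (n:ℝ) * ((n-2).choose (f-1) : ℝ) := by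
    have step1 : ∀ F ∈ A, ∑ v ∈ Finset.univ \ F, ∑ x ∈ F, w v x
        = ∑ v ∈ Finset.univ, ∑ x ∈ Finset.univ, (if v ∉ F ∧ x ∈ F then w v x else 0) := by
      intro F _
      rw [Finset.sdiff_eq_filter, Finset.sum_filter]
      refine Finset.sum_congr rfl (fun v _ => ?_)
      by_cases hv : v ∉ F
      · rw [if_pos hv]
        simp only [eq_true hv, true_and]
        rw [Finset.sum_ite_mem, Finset.univ_inter]
      · rw [if_neg hv]
        simp only [eq_false hv, false_and, if_false, Finset.sum_const_zero]
    rw [Finset.sum_congr rfl step1]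
    rw [Finset.sum_comm]
    have step2 : ∀ v : Fin n, ∑ F ∈ A, ∑ x ∈ Finset.univ, (if v ∉ F ∧ x ∈ F then w v x else 0)
        = ∑ x ∈ Finset.univ, ∑ F ∈ A, (if v ∉ F ∧ x ∈ F then w v x else 0) := fun v =>
      Finset.sum_comm
    rw [Finset.sum_congr rfl (fun v _ => step2 v)]
    have step3 : ∀ (v x : Fin n), ∑ F ∈ A, (if v ∉ F ∧ x ∈ F then w v x else 0)
        = w v x * ((A.filter (fun F => v ∉ F ∧ x ∈ F)).card : ℝ) := by
      intro v x
      rw [← Finset.sum_filter, Finset.sum_const, nsmul_eq_mul, mul_comm]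
    rw [Finset.sum_congr rfl (fun v _ => Finset.sum_congr rfl (fun x _ => step3 v x))]
    have step4 : ∀ v : Fin n, ∑ x ∈ Finset.univ,
        w v x * ((A.filter (fun F => v ∉ F ∧ x ∈ F)).card : ℝ) = ((n-2).choose (f-1) : ℝ) := by
      intro v
      have hzero : w v v * ((A.filter (fun F => v ∉ F ∧ v ∈ F)).card : ℝ) = 0 := by
        have : A.filter (fun F => v ∉ F ∧ v ∈ F) = ∅ :=
          Finset.filter_eq_empty_iff.mpr (fun F _ => by tauto)
        rw [this]
        simp
      rw [← Finset.sum_erase (f := fun x => w v x * ((A.filter (fun F => v ∉ F ∧ x ∈ F)).card : ℝ)) Finset.univ hzero]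
      have hcount : ∀ x ∈ Finset.univ.erase v,
          w v x * ((A.filter (fun F => v ∉ F ∧ x ∈ F)).card : ℝ)
          = w v x * ((n-2).choose (f-1) : ℝ) := by
        intro x hx
        rw [hA, count_FxV v x (Finset.mem_erase.mp hx).1 (by omega)]
      rw [Finset.sum_congr rfl hcount, ← Finset.sum_mul, hwsum v, one_mul]
    rw [Finset.sum_congr rfl (fun v _ => step4 v), Finset.sum_const, Finset.card_univ,
      Fintype.card_fin, nsmul_eq_mul]
  -- upper bound on the grand sum
  set GS : ℝ := ∑ F ∈ A, ∑ u ∈ Finset.univ \ F, qq F u with hGS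
  set dcc : ℝ := ((A.filter (fun F => ¬ Dpred F)).card : ℝ) with hdcc
  have hup : GS ≤ dcc * (((n:ℝ)-f) * ((n:ℝ)-f-1)) := by
    rw [hGS, ← Finset.sum_filter_add_sum_filter_not A Dpred]
    have gc1 : ∑ F ∈ A.filter Dpred, ∑ u ∈ Finset.univ \ F, qq F u ≤ 0 := by
      refine Finset.sum_nonpos (fun F hF => Finset.sum_nonpos (fun u hu => ?_))
      rw [hqq]
      simp only
      have := hcon F hF u hu
      linarith
    have gc2 : ∑ F ∈ A.filter (fun F => ¬ Dpred F), ∑ u ∈ Finset.univ \ F, qq F u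
        ≤ dcc * (((n:ℝ)-f) * ((n:ℝ)-f-1)) := by
      have hone : ∀ F ∈ A.filter (fun F => ¬ Dpred F),
          ∑ u ∈ Finset.univ \ F, qq F u ≤ ((n:ℝ)-f) * ((n:ℝ)-f-1) := by
        intro F hF
        have hFA : F ∈ A := Finset.mem_of_mem_filter F hF
        have hq1 : ∀ u ∈ Finset.univ \ F, qq F u ≤ (n:ℝ)-f-1 := by
          intro u hu
          rw [hqq]
          simp only
          have huF : u ∉ F := (Finset.mem_sdiff.mp hu).2
          have hb1 : ∑ v ∈ (Finset.univ \ F).erase u, ∑ x ∈ F, w v x ≤ (n:ℝ)-f-1 := by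
            have := Finset.sum_le_card_nsmul ((Finset.univ \ F).erase u)
              (fun v => ∑ x ∈ F, w v x) 1
              (fun v hv => hSle1 F v (Finset.mem_sdiff.mp (Finset.mem_of_mem_erase hv)).2)
            rw [nsmul_eq_mul, mul_one] at this
            calc ∑ v ∈ (Finset.univ \ F).erase u, ∑ x ∈ F, w v x
                ≤ (((Finset.univ \ F).erase u).card : ℝ) := this
              _ = (n:ℝ)-f-1 := hcard_sde F hFA u hu
          have hb2 : 0 ≤ ((f:ℝ)-1) * (1 - ∑ x ∈ F, w u x) := by
            apply mul_nonneg
            · have : (2:ℝ) ≤ (f:ℝ) := by exact_mod_cast hf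
              linarith
            · have := hSle1 F u huF
              linarith
          linarith
        have := Finset.sum_le_card_nsmul (Finset.univ \ F) (qq F) ((n:ℝ)-f-1) hq1
        rw [nsmul_eq_mul] at this
        calc ∑ u ∈ Finset.univ \ F, qq F u
            ≤ ((Finset.univ \ F).card : ℝ) * ((n:ℝ)-f-1) := this
          _ = ((n:ℝ)-f) * ((n:ℝ)-f-1) := by rw [hcard_sd F hFA]
      have := Finset.sum_le_card_nsmul (A.filter (fun F => ¬ Dpred F))
        (fun F => ∑ u ∈ Finset.univ \ F, qq F u) (((n:ℝ)-f) * ((n:ℝ)-f-1)) hone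
      rw [nsmul_eq_mul] at this
      exact this
    linarith
  -- lower (exact) value of the grand sum
  have hlow : GS = ((n:ℝ)-2) * ((n:ℝ) * ((n-2).choose (f-1) : ℝ))
      - ((f:ℝ)-1)*((n:ℝ)-f) * (A.card : ℝ) := by
    rw [hGS, Finset.sum_congr rfl hQsum, Finset.sum_sub_distrib, ← Finset.mul_sum, hsum_T,
      Finset.sum_const, nsmul_eq_mul]
    ring
  -- cardinality facts
  have hAcard : (A.card : ℝ) = (n.choose f : ℝ) := by
    rw [hA, Finset.card_powersetCard, Finset.card_univ, Fintype.card_fin]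
  have hc0pos : (1:ℝ) ≤ (n.choose f : ℝ) := by
    exact_mod_cast Nat.succ_le_of_lt (Nat.choose_pos hfn)
  have hdcc0 : 0 ≤ dcc := by rw [hdcc]; positivity
  have hnR : (4:ℝ) ≤ (n:ℝ) := by exact_mod_cast (by omega : 4 ≤ n)
  have hfR : (2:ℝ) ≤ (f:ℝ) := by exact_mod_cast hf
  have hnfR : (f:ℝ) + 2 ≤ (n:ℝ) := by exact_mod_cast hn
  -- from hDcard : n * dcc ≤ A.card
  have hsplitcard : (A.filter Dpred).card + (A.filter (fun F => ¬ Dpred F)).card = A.card :=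
    Finset.card_filter_add_card_filter_not (p := Dpred)
  have hDreal : ((A.filter Dpred).card : ℝ) = (A.card : ℝ) - dcc := by
    rw [hdcc]
    push_cast [← hsplitcard]
    ring
  have hndcc : (n:ℝ) * dcc ≤ (A.card : ℝ) := by
    have hnpos : (0:ℝ) < (n:ℝ) := by linarith
    have h1 := mul_le_mul_of_nonneg_left hDcard (le_of_lt hnpos)
    rw [hDreal] at h1
    have h2 : (n:ℝ) * ((1 - 1/(n:ℝ)) * (A.card : ℝ)) = (n:ℝ)*(A.card:ℝ) - (A.card:ℝ) := by
      field_simp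
    rw [h2, mul_sub] at h1
    linarith
  -- master identity, cast to ℝ
  have hmaster : (n:ℝ) * (((n:ℝ)-1) * ((n-2).choose (f-1) : ℝ))
      = (n.choose f : ℝ) * (f:ℝ) * ((n:ℝ)-f) := by
    have := master_id (f := f) (n := n) (by omega) (by omega)
    have hcast : ((n * ((n-1) * ((n-2).choose (f-1))) : ℕ) : ℝ)
        = (((n.choose f) * f * (n - f) : ℕ) : ℝ) := by exact_mod_cast this
    push_cast [Nat.cast_sub (by omega : 1 ≤ n), Nat.cast_sub hfn] at hcast
    convert hcast using 2
  -- final contradiction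
  have heq1 : ((n:ℝ)-1) * GS = ((n:ℝ)-(f:ℝ)) * (n.choose f : ℝ) * ((n:ℝ)-(f:ℝ)-1) := by
    rw [hlow, hAcard]
    linear_combination ((n:ℝ)-2) * hmaster
  have h6 : ((n:ℝ)-1) * GS ≤ ((n:ℝ)-1) * (dcc * (((n:ℝ)-f) * ((n:ℝ)-f-1))) :=
    mul_le_mul_of_nonneg_left hup (by linarith)
  have h8 : ((n:ℝ)-1) * dcc < (n.choose f : ℝ) := by
    rcases eq_or_lt_of_le hdcc0 with h | h
    · rw [← h]
      simp only [mul_zero]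
      linarith
    · rw [hAcard] at hndcc
      nlinarith
  have hposprod : (0:ℝ) < ((n:ℝ)-f) * ((n:ℝ)-f-1) := by
    apply mul_pos <;> linarith
  have h9 : (((n:ℝ)-1) * dcc) * (((n:ℝ)-f) * ((n:ℝ)-f-1))
      < (n.choose f : ℝ) * (((n:ℝ)-f) * ((n:ℝ)-f-1)) :=
    mul_lt_mul_of_pos_right h8 hposprod
  nlinarith [heq1, h6, h9]

open Classical in
/-- For any gossip protocol `P` on any undirected connected graph
of size `n` with `1 < f < n − 1` curious nodes: if `P` satisfies `ε`-differential
privacy against the average-case adversary — i.e. for at least a `1 − 1/n`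
fraction of the `f`-subsets `F` of the vertices, `ε`-DP holds for `F` (which in
particular is implied by worst-case `ε`-DP, where it holds for every such `F`) —
then `ε ≥ ln (f − 1)`.  The protocol is assumed valid (communications follow the
graph) and disseminating (with probability one every node eventually becomes
active). -/
theorem stmt_12 {n f : ℕ} (hf : 1 < f) (hfn : f < n - 1)
    (G : SimpleGraph (Fin n)) (hconn : G.Connected)
    (P : Fin n → Measure (Exec n)) (hprob : ∀ s, IsProbabilityMeasure (P s))
    (hvalid : ∀ s, P s {e | ¬ IsValidExec G s e} = 0)
    (hdiss : ∀ s, P s {e | ∀ v : Fin n, ∃ t, v ∈ active s e t} = 1)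
    (ε : ℝ)
    (hdp : (1 - 1 / (n : ℝ)) * (((Finset.univ : Finset (Fin n)).powersetCard f).card : ℝ)
        ≤ ((((Finset.univ : Finset (Fin n)).powersetCard f).filter
            fun F => DPFor P F ε).card : ℝ)) :
    Real.log ((f : ℝ) - 1) ≤ ε := by
  classical
  have hf2 : 2 ≤ f := hf
  have hn2 : f + 2 ≤ n := by omega
  have hn1 : 1 < n := by omega
  set w : Fin n → Fin n → ℝ := fun v x => (P v (Wv G v x)).toReal with hw
  have hw0 : ∀ v x, 0 ≤ w v x := fun v x => ENNReal.toReal_nonneg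
  have hwsum : ∀ v, ∑ x ∈ Finset.univ.erase v, w v x = 1 := by
    intro v
    haveI := hprob v
    have h := sum_W_eq_one G v hn1 P hprob hvalid hdiss
    have h2 : ∑ x ∈ Finset.univ.erase v, w v x
        = (∑ x ∈ Finset.univ.erase v, P v (Wv G v x)).toReal :=
      (ENNReal.toReal_sum (fun x _ => measure_ne_top _ _)).symm
    rw [h2, h]
    simp
  obtain ⟨F, hFD, u, hu, hQ⟩ :=
    exists_good hf2 hn2 w hw0 hwsum (fun F => DPFor P F ε) hdp
  have hFA : F ∈ (Finset.univ : Finset (Fin n)).powersetCard f := Finset.mem_of_mem_filter F hFD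
  have hDP : DPFor P F ε := (Finset.mem_filter.mp hFD).2
  have huF : u ∉ F := (Finset.mem_sdiff.mp hu).2
  haveI hPu := hprob u
  have hSc : ∀ v, v ∉ F → ∑ x ∈ F, w v x ≤ (P v (Ev F v)).toReal := by
    intro v hv
    haveI := hprob v
    have h1 : ∑ x ∈ F, P v (Wv G v x) ≤ P v (Ev F v) := sum_WF_le_Ev G F v hv P
    have h2 : ∑ x ∈ F, w v x = (∑ x ∈ F, P v (Wv G v x)).toReal :=
      (ENNReal.toReal_sum (fun x _ => measure_ne_top _ _)).symm
    rw [h2]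
    exact ENNReal.toReal_mono (measure_ne_top _ _) h1
  have hdpv : ∀ v, v ∉ F → (P v (Ev F v)).toReal ≤ Real.exp ε * (P u (Ev F v)).toReal := by
    intro v hv
    haveI := hprob v
    have h1 := dp_Ev F u v huF hv P ε hDP
    calc (P v (Ev F v)).toReal
        ≤ (ENNReal.ofReal (Real.exp ε) * P u (Ev F v)).toReal :=
          ENNReal.toReal_mono (ENNReal.mul_ne_top ENNReal.ofReal_ne_top (measure_ne_top _ _)) h1
      _ = Real.exp ε * (P u (Ev F v)).toReal := by
          rw [ENNReal.toReal_mul, ENNReal.toReal_ofReal (Real.exp_nonneg ε)]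
  have hsum1 : ∑ v ∈ Finset.univ \ F, (P u (Ev F v)).toReal ≤ 1 := by
    have h1 := sum_Ev_le_one F u P hprob
    have h2 : ∑ v ∈ Finset.univ \ F, (P u (Ev F v)).toReal
        = (∑ v ∈ Finset.univ \ F, P u (Ev F v)).toReal :=
      (ENNReal.toReal_sum (fun x _ => measure_ne_top _ _)).symm
    rw [h2]
    calc (∑ v ∈ Finset.univ \ F, P u (Ev F v)).toReal
        ≤ (1 : ENNReal).toReal := ENNReal.toReal_mono (by simp) h1
      _ = 1 := by simp
  have hsplit : (P u (Ev F u)).toReal + ∑ v ∈ (Finset.univ \ F).erase u, (P u (Ev F v)).toReal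
      = ∑ v ∈ Finset.univ \ F, (P u (Ev F v)).toReal :=
    Finset.add_sum_erase _ (fun v => (P u (Ev F v)).toReal) hu
  have hchain : ∑ v ∈ (Finset.univ \ F).erase u, ∑ x ∈ F, w v x
      ≤ Real.exp ε * (1 - ∑ x ∈ F, w u x) := by
    have c1 : ∑ v ∈ (Finset.univ \ F).erase u, ∑ x ∈ F, w v x
        ≤ ∑ v ∈ (Finset.univ \ F).erase u, Real.exp ε * (P u (Ev F v)).toReal := by
      apply Finset.sum_le_sum
      intro v hv
      have hvF : v ∉ F := (Finset.mem_sdiff.mp (Finset.mem_of_mem_erase hv)).2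
      exact le_trans (hSc v hvF) (hdpv v hvF)
    have c3 : ∑ v ∈ (Finset.univ \ F).erase u, (P u (Ev F v)).toReal
        ≤ 1 - ∑ x ∈ F, w u x := by
      have := hSc u huF
      linarith
    calc ∑ v ∈ (Finset.univ \ F).erase u, ∑ x ∈ F, w v x
        ≤ ∑ v ∈ (Finset.univ \ F).erase u, Real.exp ε * (P u (Ev F v)).toReal := c1
      _ = Real.exp ε * ∑ v ∈ (Finset.univ \ F).erase u, (P u (Ev F v)).toReal :=
          (Finset.mul_sum _ _ _).symm
      _ ≤ Real.exp ε * (1 - ∑ x ∈ F, w u x) :=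
          mul_le_mul_of_nonneg_left c3 (Real.exp_nonneg ε)
  have hS1 : ∑ x ∈ F, w u x ≤ 1 := by
    rw [← hwsum u]
    apply Finset.sum_le_sum_of_subset_of_nonneg
    · intro y hy
      exact Finset.mem_erase.mpr ⟨fun h => huF (h ▸ hy), Finset.mem_univ y⟩
    · intro x _ _
      exact hw0 u x
  have hd0 : 0 ≤ 1 - ∑ x ∈ F, w u x := by linarith
  rcases eq_or_lt_of_le hd0 with h | h
  · exfalso
    rw [← h] at hQ hchain
    simp only [mul_zero] at hQ
    linarith
  · have hlt : (f:ℝ) - 1 < Real.exp ε :=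
      (mul_lt_mul_iff_left₀ h).mp (lt_of_lt_of_le hQ hchain)
    have hpos : (0:ℝ) < (f:ℝ) - 1 := by
      have : (2:ℝ) ≤ (f:ℝ) := by exact_mod_cast hf2
      linarith
    exact (Real.log_le_iff_le_exp hpos).mpr (le_of_lt hlt)


end GossipDP
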